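/- Let F be a field of characteristic 0, and let (V₁, Π₁) and (V₂, Π₂) be systems of simple roots over F with (V₁, Π₁) irreducible. If φ: V₁ → V₂ is an F-linear map with φ(Π₁) ⊆ Π₂ and ⟨φ(α), φ(β)⟩ = ⟨α, β⟩ for all α, β ∈ Π₁, then φ is an orthogonal similitude: there exists λ ∈ F^× such that S₂(φ(x), φ(y)) = λ·S₁(x, y) for all x, y ∈ V₁. -/

import Mathlib

/-- A morphism of systems of simple roots out of an irreducible system is an
orthogonal similitude: `S₂ (φ x) (φ y) = λ · S₁ x y` for some `λ ∈ F^×`. -/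
theorem stmt_14 {F : Type*} [Field F] [CharZero F]
    {V₁ V₂ : Type*} [AddCommGroup V₁] [Module F V₁] [AddCommGroup V₂] [Module F V₂]
    (S₁ : LinearMap.BilinForm F V₁) (hS₁ : ∀ x y, S₁ x y = S₁ y x)
    (S₂ : LinearMap.BilinForm F V₂) (hS₂ : ∀ x y, S₂ x y = S₂ y x)
    {n₁ n₂ : ℕ} (b₁ : Module.Basis (Fin n₁) F V₁) (b₂ : Module.Basis (Fin n₂) F V₂)
    (hni₁ : ∀ i, S₁ (b₁ i) (b₁ i) ≠ 0)
    (hni₂ : ∀ i, S₂ (b₂ i) (b₂ i) ≠ 0)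
    (hC₁ : ∀ i j, i ≠ j → ∃ m : ℤ, m ≤ 0 ∧
      2 * S₁ (b₁ i) (b₁ j) / S₁ (b₁ i) (b₁ i) = (m : F))
    (hz₁ : ∀ i j, S₁ (b₁ i) (b₁ j) = 0 ↔ S₁ (b₁ j) (b₁ i) = 0)
    (hC₂ : ∀ i j, i ≠ j → ∃ m : ℤ, m ≤ 0 ∧
      2 * S₂ (b₂ i) (b₂ j) / S₂ (b₂ i) (b₂ i) = (m : F))
    (hz₂ : ∀ i j, S₂ (b₂ i) (b₂ j) = 0 ↔ S₂ (b₂ j) (b₂ i) = 0)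
    (hirr : ∀ s : Set (Fin n₁), s.Nonempty →
      (∀ i ∈ s, ∀ j ∉ s, S₁ (b₁ i) (b₁ j) = 0) → s = Set.univ)
    (φ : V₁ →ₗ[F] V₂)
    (hmap : ∀ i, ∃ j, φ (b₁ i) = b₂ j)
    (hbr : ∀ i j, 2 * S₂ (φ (b₁ i)) (φ (b₁ j)) / S₂ (φ (b₁ i)) (φ (b₁ i)) =
      2 * S₁ (b₁ i) (b₁ j) / S₁ (b₁ i) (b₁ i)) :
    ∃ l : F, l ≠ 0 ∧ ∀ x y, S₂ (φ x) (φ y) = l * S₁ x y := by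
  have hniφ : ∀ i, S₂ (φ (b₁ i)) (φ (b₁ i)) ≠ 0 := by
    intro i
    obtain ⟨j, hj⟩ := hmap i
    rw [hj]; exact hni₂ j
  rcases Nat.eq_zero_or_pos n₁ with h0 | hpos
  · refine ⟨1, one_ne_zero, fun x y => ?_⟩
    subst h0
    have hx : x = 0 := by
      have := b₁.sum_repr x
      simpa using this.symm
    subst hx
    simp
  set i0 : Fin n₁ := ⟨0, hpos⟩
  set l : F := S₂ (φ (b₁ i0)) (φ (b₁ i0)) / S₁ (b₁ i0) (b₁ i0) with hl
  have hlne : l ≠ 0 := div_ne_zero (hniφ i0) (hni₁ i0)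
  set s : Set (Fin n₁) := {i | S₂ (φ (b₁ i)) (φ (b₁ i)) = l * S₁ (b₁ i) (b₁ i)} with hs
  have hi0 : i0 ∈ s := by
    simp only [hs, Set.mem_setOf_eq, hl]
    rw [div_mul_cancel₀ _ (hni₁ i0)]
  have twon : (2 : F) ≠ 0 := two_ne_zero
  have hbr' : ∀ i j, S₂ (φ (b₁ i)) (φ (b₁ j)) * S₁ (b₁ i) (b₁ i)
      = S₁ (b₁ i) (b₁ j) * S₂ (φ (b₁ i)) (φ (b₁ i)) := by
    intro i j
    have h1 := hbr i j
    rw [div_eq_div_iff (hniφ i) (hni₁ i)] at h1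
    linear_combination h1 / 2
  have hsuniv : s = Set.univ := by
    refine hirr s ⟨i0, hi0⟩ ?_
    intro i hi j hj
    by_contra hij
    apply hj
    simp only [hs, Set.mem_setOf_eq] at hi ⊢
    have e1 := hbr' i j
    have e2 := hbr' j i
    rw [hS₂ (φ (b₁ j)) (φ (b₁ i)), hS₁ (b₁ j) (b₁ i)] at e2
    have key : S₁ (b₁ i) (b₁ j) * (S₂ (φ (b₁ j)) (φ (b₁ j)) * S₁ (b₁ i) (b₁ i))
        = S₁ (b₁ i) (b₁ j) * (S₂ (φ (b₁ i)) (φ (b₁ i)) * S₁ (b₁ j) (b₁ j)) := by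
      calc S₁ (b₁ i) (b₁ j) * (S₂ (φ (b₁ j)) (φ (b₁ j)) * S₁ (b₁ i) (b₁ i))
          = (S₁ (b₁ i) (b₁ j) * S₂ (φ (b₁ j)) (φ (b₁ j))) * S₁ (b₁ i) (b₁ i) := by ring
        _ = (S₂ (φ (b₁ i)) (φ (b₁ j)) * S₁ (b₁ j) (b₁ j)) * S₁ (b₁ i) (b₁ i) := by rw [e2]
        _ = (S₂ (φ (b₁ i)) (φ (b₁ j)) * S₁ (b₁ i) (b₁ i)) * S₁ (b₁ j) (b₁ j) := by ring
        _ = (S₁ (b₁ i) (b₁ j) * S₂ (φ (b₁ i)) (φ (b₁ i))) * S₁ (b₁ j) (b₁ j) := by rw [e1]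
        _ = S₁ (b₁ i) (b₁ j) * (S₂ (φ (b₁ i)) (φ (b₁ i)) * S₁ (b₁ j) (b₁ j)) := by ring
    have key2 := mul_left_cancel₀ hij key
    rw [hi] at key2
    exact mul_right_cancel₀ (hni₁ i) (by linear_combination key2)
  have hdiag : ∀ i, S₂ (φ (b₁ i)) (φ (b₁ i)) = l * S₁ (b₁ i) (b₁ i) := by
    intro i
    have : i ∈ s := hsuniv ▸ Set.mem_univ i
    exact this
  have hkey : ∀ i j, S₂ (φ (b₁ i)) (φ (b₁ j)) = l * S₁ (b₁ i) (b₁ j) := by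
    intro i j
    have e1 := hbr' i j
    rw [hdiag i] at e1
    exact mul_right_cancel₀ (hni₁ i) (by linear_combination e1)
  refine ⟨l, hlne, ?_⟩
  have hext : S₂.compl₁₂ φ φ = l • S₁ := by
    refine b₁.ext fun i => b₁.ext fun j => ?_
    simp only [LinearMap.compl₁₂_apply, LinearMap.smul_apply, smul_eq_mul]
    exact hkey i j
  intro x y
  have := LinearMap.congr_fun (LinearMap.congr_fun hext x) y
  simpa using this
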